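/- Suppose a random variable sequence $n^{-1}N_n^>$ (with $0 \le N_n^> \le n$) converges in distribution to some probability law $Q$ on $[0,1]$, and suppose the implication 'Spitzer's condition with parameter $\rho$ implies $n^{-1}N_n^> \xrightarrow{d} AS(\rho)$' holds. Then $Q = AS(\rho)$ with $\rho = \int_0^1 x\, Q(dx)$. In particular, $n^{-1}N_n^>$ either converges in distribution to a generalized arcsine law or does not converge in distribution at all. -/

import Mathlib

open MeasureTheory Filter Set ProbabilityTheory
open scoped ENNReal NNReal Classical Topology

noncomputable section

/-- Partial sums `S_n = X_1 + ⋯ + X_n` (with `S_0 = 0`). -/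
def partialSum {Ω : Type*} (X : ℕ → Ω → ℝ) (n : ℕ) (ω : Ω) : ℝ :=
  ∑ k ∈ Finset.Icc 1 n, X k ω

/-- The generalized arcsine law `AS(ρ)`: `δ₀` for `ρ ≤ 0`, `δ₁` for `ρ ≥ 1`, and otherwise the
distribution on `(0,1)` with density `(sin (π ρ) / π) x^(ρ-1) (1-x)^(-ρ)`. -/
def arcsineLaw (ρ : ℝ) : Measure ℝ :=
  if ρ ≤ 0 then Measure.dirac 0
  else if 1 ≤ ρ then Measure.dirac 1
  else volume.withDensity fun x =>
    ENNReal.ofReal ((Set.Ioo (0:ℝ) 1).indicator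
      (fun x => (Real.sin (Real.pi * ρ) / Real.pi) * x ^ (ρ - 1) * (1 - x) ^ (-ρ)) x)

/-- Convergence in distribution of real random variables to a law `ν`. -/
def TendstoInDistribution {Ω : Type*} [MeasurableSpace Ω] (μ : Measure Ω)
    (W : ℕ → Ω → ℝ) (ν : Measure ℝ) : Prop :=
  ∀ f : BoundedContinuousFunction ℝ ℝ,
    Tendsto (fun n => ∫ ω, f (W n ω) ∂μ) atTop (𝓝 (∫ x, f x ∂ν))

/-- Convergence to `0` in probability. -/
def TendstoInProbability {Ω : Type*} [MeasurableSpace Ω] (μ : Measure Ω)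
    (W : ℕ → Ω → ℝ) : Prop :=
  ∀ ε > (0:ℝ), Tendsto (fun n => μ {ω | ε ≤ |W n ω|}) atTop (𝓝 0)

/-- A Markov random walk with positive recurrent driving chain on a countable state space `S`:
driving chain `M`, increments `X`, laws `Pr i := ℙ(· | M₀ = i)`, increment kernel `K`,
transition matrix `P`, stationary distribution `π`, recurrence and positive recurrence. -/
structure MRW (Ω : Type*) [MeasurableSpace Ω] (S : Type*) [MeasurableSpace S]
    [MeasurableSingletonClass S] [Countable S] where
  M : ℕ → Ω → S
  X : ℕ → Ω → ℝ
  Pr : S → Measure Ω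
  prProb : ∀ i, IsProbabilityMeasure (Pr i)
  measM : ∀ n, Measurable (M n)
  measX : ∀ n, Measurable (X n)
  K : S → S → Measure ℝ
  kProb : ∀ i j, IsProbabilityMeasure (K i j)
  P : S → S → ℝ≥0∞
  init : ∀ i, Pr i {ω | M 0 ω = i} = 1
  markov : ∀ i (n : ℕ) (path : ℕ → S),
    Pr i {ω | ∀ k ≤ n + 1, M k ω = path k}
      = Pr i {ω | ∀ k ≤ n, M k ω = path k} * P (path n) (path (n + 1))
  condLaw : ∀ i (n : ℕ) (path : ℕ → S) (A : ℕ → Set ℝ), (∀ k, MeasurableSet (A k)) →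
    Pr i {ω | (∀ k ≤ n, M k ω = path k) ∧ ∀ k ∈ Finset.Icc 1 n, X k ω ∈ A k}
      = Pr i {ω | ∀ k ≤ n, M k ω = path k} * ∏ k ∈ Finset.Icc 1 n, K (path (k - 1)) (path k) (A k)
  π : S → ℝ≥0∞
  πPos : ∀ i, 0 < π i
  πSum : ∑' i, π i = 1
  πStat : ∀ j, ∑' i, π i * P i j = π j
  recurrent : ∀ i j, Pr j {ω | ∃ n, 1 ≤ n ∧ M n ω = i} = 1
  posRec : ∀ i, ∫⁻ ω, ((sInf {n | 1 ≤ n ∧ M n ω = i} : ℕ) : ℝ≥0∞) ∂Pr i < ∞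

variable {Ω : Type*} [MeasurableSpace Ω] {S : Type*} [MeasurableSpace S]
  [MeasurableSingletonClass S] [Countable S]

/-- `retTime M i ω n` is the `n`-th return time `τ_n(i)` of the driving chain to state `i`
(with `τ_0(i) = 0`; by convention `sInf ∅ = 0` for a never-returning path). -/
def retTime (M : ℕ → Ω → S) (i : S) (ω : Ω) : ℕ → ℕ
  | 0 => 0
  | k + 1 => sInf {n | retTime M i ω k < n ∧ M n ω = i}

/-- An MRW is null-homologous if `X_n = g(M_n) - g(M_{n-1})` a.s. for some `g`;
it is nontrivial otherwise. -/
def MRW.IsNontrivial (W : MRW Ω S) : Prop :=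
  ¬ ∃ g : S → ℝ, ∀ i, W.Pr i {ω | ∀ n, W.X (n + 1) ω = g (W.M (n + 1) ω) - g (W.M n ω)} = 1

/-- `D_k^i`: the maximal negative excursion below `S_{τ_{k-1}(i)}` during the `k`-th cycle. -/
def excD (M : ℕ → Ω → S) (X : ℕ → Ω → ℝ) (i : S) (k : ℕ) (ω : Ω) : ℝ :=
  ⨆ l ∈ Set.Ioc (retTime M i ω (k - 1)) (retTime M i ω k),
    max (-(partialSum X l ω - partialSum X (retTime M i ω (k - 1)) ω)) 0

/-- `H_k^i`: the maximal positive excursion above `S_{τ_{k-1}(i)}` during the `k`-th cycle. -/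
def excH (M : ℕ → Ω → S) (X : ℕ → Ω → ℝ) (i : S) (k : ℕ) (ω : Ω) : ℝ :=
  ⨆ l ∈ Set.Ioc (retTime M i ω (k - 1)) (retTime M i ω k),
    max (partialSum X l ω - partialSum X (retTime M i ω (k - 1)) ω) 0

/-- `N_n^>(x)`: the number of indices `1 ≤ k ≤ n` with `S_k > x`, as a real number. -/
def countPos {Ω : Type*} (X : ℕ → Ω → ℝ) (x : ℝ) (n : ℕ) (ω : Ω) : ℝ :=
  ∑ k ∈ Finset.Icc 1 n, if x < partialSum X k ω then (1:ℝ) else 0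

/-- `N_n^≤(x)`: the number of indices `1 ≤ k ≤ n` with `S_k ≤ x`, as a real number. -/
def countLe {Ω : Type*} (X : ℕ → Ω → ℝ) (x : ℝ) (n : ℕ) (ω : Ω) : ℝ :=
  ∑ k ∈ Finset.Icc 1 n, if partialSum X k ω ≤ x then (1:ℝ) else 0

/-- Strictly ascending ladder epochs of a sequence `T` (with `T 0 = 0` intended): the value `0`
for an epoch `σ(k)`, `k ≥ 1`, encodes `σ(k) = ∞` (defective case, `sInf ∅ = 0`). -/
def ladderEpoch (T : ℕ → ℝ) : ℕ → ℕ
  | 0 => 0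
  | 1 => sInf {m | 0 < m ∧ 0 < T m}
  | k + 2 =>
      if ladderEpoch T (k + 1) = 0 then 0
      else sInf {m | ladderEpoch T (k + 1) < m ∧ T (ladderEpoch T (k + 1)) < T m}


/-- The clamp of `ℝ` to `[0,1]` as a bounded continuous function. -/
def clamp01 : BoundedContinuousFunction ℝ ℝ :=
  ⟨⟨fun x => max 0 (min x 1), (continuous_const.max (continuous_id.min continuous_const))⟩,
    1, fun x y => by
    simp only [Real.dist_eq]
    have h1 : (0:ℝ) ≤ max 0 (min x 1) := le_max_left _ _
    have h2 : max 0 (min x 1) ≤ 1 := max_le zero_le_one (min_le_right _ _)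
    have h3 : (0:ℝ) ≤ max 0 (min y 1) := le_max_left _ _
    have h4 : max 0 (min y 1) ≤ 1 := max_le zero_le_one (min_le_right _ _)
    rw [abs_le]; constructor <;> linarith⟩

lemma clamp01_eq_of_mem {x : ℝ} (hx : x ∈ Set.Icc (0:ℝ) 1) : clamp01 x = x := by
  show max 0 (min x 1) = x
  rw [min_eq_left hx.2, max_eq_right hx.1]

/-- Remark: if `N_n^>/n` (with `0 ≤ N_n^> ≤ n`) converges in distribution to some law `Q` on
`[0,1]`, and Spitzer's condition with parameter `ρ` implies `N_n^>/n →ᵈ AS(ρ)`, then necessarily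
`Q = AS(ρ)` with `ρ = ∫ x dQ(x)`; i.e. the only possible distributional limits of `N_n^>/n` are
generalized arcsine laws. -/
theorem arcsine_only_possible_limit
    {Ω : Type*} [MeasurableSpace Ω] (μ : Measure Ω) [IsProbabilityMeasure μ]
    (N : ℕ → Ω → ℝ) (hmeas : ∀ n, Measurable (N n))
    (hbd : ∀ (n : ℕ) ω, N n ω ∈ Set.Icc (0:ℝ) (n : ℝ))
    (Q : Measure ℝ) [IsProbabilityMeasure Q] (hQ : Q (Set.Icc (0:ℝ) 1)ᶜ = 0)
    (himp : ∀ ρ ∈ Set.Icc (0:ℝ) 1,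
      Tendsto (fun n => (∫ ω, N n ω ∂μ) / n) atTop (𝓝 ρ) →
        TendstoInDistribution μ (fun n ω => N n ω / n) (arcsineLaw ρ))
    (hconv : TendstoInDistribution μ (fun n ω => N n ω / n) Q) :
    Q = arcsineLaw (∫ x, x ∂Q) := by
  classical
  set ρ := ∫ x, x ∂Q with hρdef
  have haeQ : ∀ᵐ x ∂Q, x ∈ Set.Icc (0:ℝ) 1 := by
    rw [ae_iff]
    exact hQ
  have hint : Integrable (fun x : ℝ => x) Q := by
    refine (integrable_const (1:ℝ)).mono' measurable_id.aestronglyMeasurable ?_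
    filter_upwards [haeQ] with x hx
    rw [Real.norm_eq_abs, abs_le]
    exact ⟨by linarith [hx.1], hx.2⟩
  have hρ0 : 0 ≤ ρ :=
    integral_nonneg_of_ae (by filter_upwards [haeQ] with x hx using hx.1)
  have hρ1 : ρ ≤ 1 := by
    have h := integral_mono_ae hint (integrable_const (1:ℝ))
      (by filter_upwards [haeQ] with x hx using hx.2)
    simpa using h
  have hQint : ∫ x, clamp01 x ∂Q = ρ := by
    refine integral_congr_ae ?_
    filter_upwards [haeQ] with x hx
    exact clamp01_eq_of_mem hx
  have hpt : ∀ (n : ℕ) ω, N n ω / n ∈ Set.Icc (0:ℝ) 1 := by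
    intro n ω
    rcases Nat.eq_zero_or_pos n with h | h
    · subst h
      have h0 := hbd 0 ω
      simp only [Nat.cast_zero, Set.mem_Icc] at h0 ⊢
      have : N 0 ω = 0 := le_antisymm h0.2 h0.1
      simp [this]
    · have hn : (0:ℝ) < n := by exact_mod_cast h
      exact ⟨div_nonneg (hbd n ω).1 hn.le, (div_le_one hn).2 (hbd n ω).2⟩
  have heq : ∀ n : ℕ, ∫ ω, clamp01 (N n ω / n) ∂μ = (∫ ω, N n ω ∂μ) / n := by
    intro n
    rw [← integral_div]
    exact integral_congr_ae (Eventually.of_forall fun ω => clamp01_eq_of_mem (hpt n ω))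
  have hmean : Tendsto (fun n : ℕ => (∫ ω, N n ω ∂μ) / n) atTop (𝓝 ρ) := by
    have h1 := hconv clamp01
    rw [hQint] at h1
    have hfe : (fun n : ℕ => (∫ ω, N n ω ∂μ) / n)
        = fun n : ℕ => ∫ ω, clamp01 (N n ω / n) ∂μ := funext fun n => (heq n).symm
    rw [hfe]
    exact h1
  have hconv' := himp ρ ⟨hρ0, hρ1⟩ hmean
  have hinteq : ∀ f : BoundedContinuousFunction ℝ ℝ,
      ∫ x, f x ∂Q = ∫ x, f x ∂(arcsineLaw ρ) :=
    fun f => tendsto_nhds_unique (hconv f) (hconv' f)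
  have hfin : IsFiniteMeasure (arcsineLaw ρ) := by
    have h1 := hinteq (BoundedContinuousFunction.const ℝ (1:ℝ))
    have h2 : (1:ℝ) = ((arcsineLaw ρ) Set.univ).toReal := by
      simpa [integral_const, measureReal_def] using h1
    constructor
    by_contra hcon
    rw [not_lt, top_le_iff] at hcon
    rw [hcon] at h2
    simp at h2
  haveI := hfin
  refine ext_of_forall_lintegral_eq_of_IsFiniteMeasure fun f => ?_
  have hg := hinteq (BoundedContinuousFunction.comp ((↑) : ℝ≥0 → ℝ)
    isometry_subtype_coe.lipschitz f)
  have h1 : (∫⁻ x, f x ∂Q).toReal = (∫⁻ x, f x ∂(arcsineLaw ρ)).toReal := by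
    rw [BoundedContinuousFunction.toReal_lintegral_coe_eq_integral f Q,
        BoundedContinuousFunction.toReal_lintegral_coe_eq_integral f (arcsineLaw ρ)]
    exact hg
  exact (ENNReal.toReal_eq_toReal_iff'
    (BoundedContinuousFunction.lintegral_lt_top_of_nnreal Q f).ne
    (BoundedContinuousFunction.lintegral_lt_top_of_nnreal (arcsineLaw ρ) f).ne).1 h1
end
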